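/- arXiv:1812.06647 — 2 statements merged into one kernel-verified Lean document; each statement's English description precedes it below -/
import Mathlib

section
/- For every s ∈ S_k^p, the inner minimization over U attains its minimum in closed form, and consequently the regularized interpretable matrix completion problem min over U ∈ ℝ^{n×p} and s ∈ S_k^p of (1/(nm))(Σ_{(i,j)∈Ω}(X_{ij}−A_{ij})² + (1/γ)‖U‖_F²) subject to X = U·diag(s)·Bᵀ is equal to min_{s ∈ S_k^p} c(s), where c(s) = (1/(nm)) Σ_{i=1}^n ā_i (I_m + γ W_i (Σ_{j=1}^p s_j K_j) W_i)⁻¹ ā_iᵀ. Moreover c is a convex function of s. -/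
open Matrix BigOperators

/-- `S_k^p`: binary vectors in `{0,1}^p` with exactly `k` ones. -/
def SkpSet (p k : ℕ) : Set (Fin p → ℝ) :=
  {s | (∀ j, s j = 0 ∨ s j = 1) ∧ ∑ j, s j = (k : ℝ)}

/-- Diagonal 0/1 matrix `W_i` of the observed entries of row `i`. -/
noncomputable def Wmat {n m : ℕ} (Om : Finset (Fin n × Fin m)) (i : Fin n) :
    Matrix (Fin m) (Fin m) ℝ :=
  Matrix.diagonal (fun j => if (i, j) ∈ Om then (1 : ℝ) else 0)

/-- `ā_i`: the `i`-th row of `A` with unobserved entries set to `0`. -/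
noncomputable def abar {n m : ℕ} (Om : Finset (Fin n × Fin m))
    (A : Matrix (Fin n) (Fin m) ℝ) (i : Fin n) : Fin m → ℝ :=
  fun j => if (i, j) ∈ Om then A i j else 0

/-- `K_j = b^j (b^j)ᵀ`, the outer product of the `j`-th column of `B`. -/
noncomputable def Kmat {m p : ℕ} (B : Matrix (Fin m) (Fin p) ℝ) (j : Fin p) :
    Matrix (Fin m) (Fin m) ℝ :=
  Matrix.vecMulVec (fun r => B r j) (fun r => B r j)

/-- `c(s) = (1/(nm)) Σ_i ā_i (I_m + γ W_i (Σ_j s_j K_j) W_i)⁻¹ ā_iᵀ`. -/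
noncomputable def cfun {n m p : ℕ} (γ : ℝ) (Om : Finset (Fin n × Fin m))
    (A : Matrix (Fin n) (Fin m) ℝ) (B : Matrix (Fin m) (Fin p) ℝ)
    (s : Fin p → ℝ) : ℝ :=
  (1 / ((n : ℝ) * (m : ℝ))) * ∑ i : Fin n,
    abar Om A i ⬝ᵥ
      (((1 : Matrix (Fin m) (Fin m) ℝ) +
          γ • (Wmat Om i * (∑ j : Fin p, s j • Kmat B j) * Wmat Om i))⁻¹ *ᵥ abar Om A i)

/-- The regularized interpretable matrix completion objective
`(1/(nm)) (Σ_{(i,j)∈Ω} (X_{ij}-A_{ij})² + (1/γ)‖U‖_F²)` with `X = U diag(s) Bᵀ`. -/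
noncomputable def objFun {n m p : ℕ} (γ : ℝ) (Om : Finset (Fin n × Fin m))
    (A : Matrix (Fin n) (Fin m) ℝ) (B : Matrix (Fin m) (Fin p) ℝ)
    (U : Matrix (Fin n) (Fin p) ℝ) (s : Fin p → ℝ) : ℝ :=
  (1 / ((n : ℝ) * (m : ℝ))) *
    ((∑ e ∈ Om, ((U * Matrix.diagonal s * Bᵀ) e.1 e.2 - A e.1 e.2) ^ 2) +
      (1 / γ) * ∑ i, ∑ j, (U i j) ^ 2)

/-! ### Auxiliary lemmas -/

lemma dot_self_nonneg' {m : ℕ} (v : Fin m → ℝ) : 0 ≤ v ⬝ᵥ v :=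
  Finset.sum_nonneg fun _ _ => mul_self_nonneg _

lemma posdef_inv_mulVec {m : ℕ} {P : Matrix (Fin m) (Fin m) ℝ} (hP : P.PosDef)
    (y : Fin m → ℝ) : P *ᵥ (P⁻¹ *ᵥ y) = y := by
  rw [mulVec_mulVec, Matrix.mul_nonsing_inv _ (Matrix.isUnit_iff_isUnit_det _ |>.1 hP.isUnit),
    one_mulVec]

lemma symm_mulVec {m : ℕ} {P : Matrix (Fin m) (Fin m) ℝ} (hP : P.IsHermitian)
    (u w : Fin m → ℝ) : w ⬝ᵥ (P *ᵥ u) = u ⬝ᵥ (P *ᵥ w) := by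
  rw [Matrix.dotProduct_mulVec, ← Matrix.mulVec_transpose, dotProduct_comm]
  congr 1
  rw [← Matrix.conjTranspose_eq_transpose_of_trivial, hP.eq]

/-- Key quadratic upper bound: `2⟨u,y⟩ - ⟨u,Pu⟩ ≤ ⟨y,P⁻¹y⟩` for `P` posdef. -/
lemma quad_ub {m : ℕ} {P : Matrix (Fin m) (Fin m) ℝ} (hP : P.PosDef)
    (y u : Fin m → ℝ) : 2 * (u ⬝ᵥ y) - u ⬝ᵥ (P *ᵥ u) ≤ y ⬝ᵥ (P⁻¹ *ᵥ y) := by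
  set w := P⁻¹ *ᵥ y with hw
  have hPw : P *ᵥ w = y := posdef_inv_mulVec hP y
  have h0 : 0 ≤ (u - w) ⬝ᵥ (P *ᵥ (u - w)) := by
    have := hP.posSemidef.dotProduct_mulVec_nonneg (u - w)
    simpa using this
  have hexp : (u - w) ⬝ᵥ (P *ᵥ (u - w))
      = u ⬝ᵥ (P *ᵥ u) - 2 * (u ⬝ᵥ y) + y ⬝ᵥ w := by
    rw [Matrix.mulVec_sub, dotProduct_sub, sub_dotProduct, sub_dotProduct,
      symm_mulVec hP.isHermitian u w, hPw]
    rw [dotProduct_comm w y]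
    ring
  nlinarith [h0, hexp]

/-- Ridge decomposition: the row objective equals `⟨y,v⟩` plus a nonnegative remainder,
where `v` solves `(1 + γ XᵀX) v = y`. -/
lemma ridge_decomp {p m : ℕ} {γ : ℝ} (hγ : 0 < γ) (X : Matrix (Fin p) (Fin m) ℝ)
    (y v : Fin m → ℝ)
    (hv : ((1 : Matrix (Fin m) (Fin m) ℝ) + γ • (Xᵀ * X)) *ᵥ v = y)
    (u : Fin p → ℝ) :
    (∑ j, ((u ᵥ* X) j - y j) ^ 2) + (1 / γ) * ∑ j, u j ^ 2
      = y ⬝ᵥ v + (((u - γ • (X *ᵥ v)) ᵥ* X) ⬝ᵥ ((u - γ • (X *ᵥ v)) ᵥ* X)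
          + (1 / γ) * ((u - γ • (X *ᵥ v)) ⬝ᵥ (u - γ • (X *ᵥ v)))) := by
  have hγ' : γ ≠ 0 := hγ.ne'
  set u₀ : Fin p → ℝ := γ • (X *ᵥ v) with hu₀
  set w : Fin p → ℝ := u - u₀ with hwdef
  have hsmul : γ • ((Xᵀ * X) *ᵥ v) = y - v := by
    rw [add_mulVec, one_mulVec, smul_mulVec] at hv
    rw [← hv]; abel
  have ha₀ : u₀ ᵥ* X = y - v := by
    rw [hu₀, ← mulVec_transpose, mulVec_smul, mulVec_mulVec, hsmul]
  have hXv : (X *ᵥ v) ᵥ* X = γ⁻¹ • (y - v) := by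
    rw [← mulVec_transpose, mulVec_mulVec, ← hsmul, ← smul_assoc]
    simp [inv_mul_cancel₀ hγ']
  have hu₀u₀ : u₀ ⬝ᵥ u₀ = γ * ((y - v) ⬝ᵥ v) := by
    rw [hu₀, smul_dotProduct, dotProduct_smul, Matrix.dotProduct_mulVec, hXv,
      smul_dotProduct, smul_eq_mul, smul_eq_mul, smul_eq_mul]
    field_simp
  have hwu₀ : w ⬝ᵥ u₀ = γ * ((w ᵥ* X) ⬝ᵥ v) := by
    rw [hu₀, dotProduct_smul, Matrix.dotProduct_mulVec, smul_eq_mul]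
  have hu : u = w + u₀ := by rw [hwdef]; abel
  have e1 : ∀ a : Fin p → ℝ, ∑ j, a j ^ 2 = a ⬝ᵥ a := fun a => by simp [dotProduct, sq]
  have e2 : ∑ j, ((u ᵥ* X) j - y j) ^ 2 = (u ᵥ* X - y) ⬝ᵥ (u ᵥ* X - y) := by
    simp [dotProduct, sq]
  have huX : u ᵥ* X - y = w ᵥ* X - v := by
    rw [hu, add_vecMul, ha₀]; abel
  have huu : u ⬝ᵥ u = w ⬝ᵥ w + 2 * (w ⬝ᵥ u₀) + u₀ ⬝ᵥ u₀ := by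
    rw [hu]
    rw [add_dotProduct, dotProduct_add, dotProduct_add, dotProduct_comm u₀ w]
    ring
  rw [e1, e2, huX, huu, hwu₀, hu₀u₀]
  rw [dotProduct_sub, sub_dotProduct, sub_dotProduct, sub_dotProduct,
    dotProduct_comm v (w ᵥ* X)]
  field_simp
  simp only [sub_dotProduct]
  ring

lemma sumK {m p : ℕ} (B : Matrix (Fin m) (Fin p) ℝ) (s : Fin p → ℝ) :
    ∑ j, s j • Kmat B j = B * Matrix.diagonal s * Bᵀ := by
  ext a b
  rw [Matrix.mul_apply]
  simp only [Matrix.mul_diagonal, Matrix.transpose_apply, Matrix.sum_apply,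
    Matrix.smul_apply, Kmat, Matrix.vecMulVec_apply, smul_eq_mul]
  exact Finset.sum_congr rfl fun j _ => by ring

lemma WdBW {m p : ℕ} (B : Matrix (Fin m) (Fin p) ℝ) (W : Matrix (Fin m) (Fin m) ℝ)
    (hW : Wᵀ = W) (d : Fin p → ℝ) :
    (Matrix.diagonal d * Bᵀ * W)ᵀ * (Matrix.diagonal d * Bᵀ * W)
      = W * (B * Matrix.diagonal (fun j => d j * d j) * Bᵀ) * W := by
  have h1 : (Matrix.diagonal d * Bᵀ * W)ᵀ = W * (B * Matrix.diagonal d) := by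
    rw [Matrix.transpose_mul, Matrix.transpose_mul, Matrix.transpose_transpose,
      Matrix.diagonal_transpose, hW]
  have h2 : Matrix.diagonal d * Matrix.diagonal d
      = Matrix.diagonal (fun j => d j * d j) := by
    rw [Matrix.diagonal_mul_diagonal]
  have h3 : Matrix.diagonal d * (Matrix.diagonal d * (Bᵀ * W))
      = Matrix.diagonal (fun j => d j * d j) * (Bᵀ * W) := by
    rw [← Matrix.mul_assoc, h2]
  rw [h1]
  simp only [Matrix.mul_assoc, h3]

lemma smulPSD {p m : ℕ} {γ : ℝ} (hγ : 0 ≤ γ) (C : Matrix (Fin p) (Fin m) ℝ) :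
    (γ • (Cᵀ * C)).PosSemidef := by
  have h : γ • (Cᵀ * C) = (Real.sqrt γ • C)ᵀ * (Real.sqrt γ • C) := by
    rw [Matrix.transpose_smul, Matrix.smul_mul, Matrix.mul_smul, smul_smul,
      Real.mul_self_sqrt hγ]
  rw [h, ← Matrix.conjTranspose_eq_transpose_of_trivial]
  exact Matrix.posSemidef_conjTranspose_mul_self _

lemma Qpos {n m p : ℕ} {γ : ℝ} (hγ : 0 < γ) (Om : Finset (Fin n × Fin m))
    (B : Matrix (Fin m) (Fin p) ℝ) (i : Fin n) {s : Fin p → ℝ} (hs : ∀ j, 0 ≤ s j) :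
    ((1 : Matrix (Fin m) (Fin m) ℝ) +
      γ • (Wmat Om i * (∑ j, s j • Kmat B j) * Wmat Om i)).PosDef := by
  have hW : (Wmat Om i)ᵀ = Wmat Om i := Matrix.diagonal_transpose _
  have hs' : s = (fun j => Real.sqrt (s j) * Real.sqrt (s j)) :=
    funext fun j => (Real.mul_self_sqrt (hs j)).symm
  have key : Wmat Om i * (∑ j, s j • Kmat B j) * Wmat Om i
      = (Matrix.diagonal (fun j => Real.sqrt (s j)) * Bᵀ * Wmat Om i)ᵀ *
        (Matrix.diagonal (fun j => Real.sqrt (s j)) * Bᵀ * Wmat Om i) := by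
    rw [sumK]
    conv_lhs => rw [hs']
    rw [← WdBW B _ hW]
  exact Matrix.PosDef.add_posSemidef Matrix.PosDef.one
    (by rw [key]; exact smulPSD hγ.le _)

lemma objFun_rows {n m p : ℕ} (γ : ℝ) (Om : Finset (Fin n × Fin m))
    (A : Matrix (Fin n) (Fin m) ℝ) (B : Matrix (Fin m) (Fin p) ℝ)
    (U : Matrix (Fin n) (Fin p) ℝ) (s : Fin p → ℝ) :
    objFun γ Om A B U s = (1 / ((n : ℝ) * (m : ℝ))) * ∑ i,
      ((∑ j, (((U i) ᵥ* (Matrix.diagonal s * Bᵀ * Wmat Om i)) j - abar Om A i j) ^ 2)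
        + (1 / γ) * ∑ j, (U i j) ^ 2) := by
  unfold objFun
  congr 1
  rw [Finset.sum_add_distrib, ← Finset.mul_sum]
  congr 1
  have step1 : (∑ e ∈ Om, ((U * Matrix.diagonal s * Bᵀ) e.1 e.2 - A e.1 e.2) ^ 2)
      = ∑ e : Fin n × Fin m, if e ∈ Om
          then ((U * Matrix.diagonal s * Bᵀ) e.1 e.2 - A e.1 e.2) ^ 2 else 0 := by
    rw [Finset.sum_ite_mem, Finset.univ_inter]
  rw [step1, Fintype.sum_prod_type]
  refine Finset.sum_congr rfl fun i _ => Finset.sum_congr rfl fun j _ => ?_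
  have hval : ((U i) ᵥ* (Matrix.diagonal s * Bᵀ * Wmat Om i)) j
      = (U * (Matrix.diagonal s * Bᵀ)) i j * (if (i, j) ∈ Om then (1:ℝ) else 0) := by
    rw [← Matrix.vecMul_vecMul, Wmat, Matrix.vecMul_diagonal,
      Matrix.mul_apply_eq_vecMul]
  rw [hval, ← Matrix.mul_assoc]
  unfold abar
  by_cases h : (i, j) ∈ Om <;> simp [h]

lemma skp_nonneg {p k : ℕ} {s : Fin p → ℝ} (hs : s ∈ SkpSet p k) : ∀ j, 0 ≤ s j :=
  fun j => by rcases hs.1 j with h | h <;> simp [h]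

lemma skp_finite {p k : ℕ} : (SkpSet p k).Finite := by
  have hsub : SkpSet p k ⊆ Set.pi Set.univ (fun _ : Fin p => ({0, 1} : Set ℝ)) := by
    intro s hs j _
    rcases hs.1 j with h | h <;> simp [h]
  exact Set.Finite.subset
    (Set.Finite.pi fun _ => (Set.finite_singleton (1 : ℝ)).insert 0) hsub

lemma skp_nonempty {p k : ℕ} (hkp : k ≤ p) : (SkpSet p k).Nonempty := by
  refine ⟨fun j => if (j : ℕ) < k then 1 else 0, fun j => ?_, ?_⟩
  · by_cases h : (j : ℕ) < k <;> simp [h]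
  · rw [Fin.sum_univ_eq_sum_range (fun j => if j < k then (1 : ℝ) else 0) p]
    rw [← Finset.sum_subset (Finset.range_subset_range.2 hkp)
      (fun x _ hx => if_neg (by simpa using hx))]
    rw [Finset.sum_congr rfl (fun x hx => if_pos (Finset.mem_range.1 hx))]
    simp


lemma row_key {n m p : ℕ} {γ : ℝ} (hγ : 0 < γ) (Om : Finset (Fin n × Fin m))
    (A : Matrix (Fin n) (Fin m) ℝ) (B : Matrix (Fin m) (Fin p) ℝ) {s : Fin p → ℝ}
    (hbin : ∀ j, s j = 0 ∨ s j = 1) (i : Fin n) :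
    (∀ u : Fin p → ℝ,
      abar Om A i ⬝ᵥ (((1 : Matrix (Fin m) (Fin m) ℝ) +
          γ • (Wmat Om i * (∑ j, s j • Kmat B j) * Wmat Om i))⁻¹ *ᵥ abar Om A i)
        ≤ (∑ j, ((u ᵥ* (Matrix.diagonal s * Bᵀ * Wmat Om i)) j - abar Om A i j) ^ 2)
          + (1 / γ) * ∑ j, u j ^ 2) ∧
    ((∑ j, (((γ • ((Matrix.diagonal s * Bᵀ * Wmat Om i) *ᵥ
            (((1 : Matrix (Fin m) (Fin m) ℝ) +
              γ • (Wmat Om i * (∑ j, s j • Kmat B j) * Wmat Om i))⁻¹ *ᵥ abar Om A i)))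
          ᵥ* (Matrix.diagonal s * Bᵀ * Wmat Om i)) j - abar Om A i j) ^ 2)
        + (1 / γ) * ∑ j, (γ • ((Matrix.diagonal s * Bᵀ * Wmat Om i) *ᵥ
            (((1 : Matrix (Fin m) (Fin m) ℝ) +
              γ • (Wmat Om i * (∑ j, s j • Kmat B j) * Wmat Om i))⁻¹ *ᵥ abar Om A i))) j ^ 2
      = abar Om A i ⬝ᵥ (((1 : Matrix (Fin m) (Fin m) ℝ) +
          γ • (Wmat Om i * (∑ j, s j • Kmat B j) * Wmat Om i))⁻¹ *ᵥ abar Om A i)) := by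
  have hnn : ∀ j, 0 ≤ s j := fun j => by rcases hbin j with h | h <;> simp [h]
  have hW : (Wmat Om i)ᵀ = Wmat Om i := Matrix.diagonal_transpose _
  have hs2 : (fun j => s j * s j) = s := funext fun j => by rcases hbin j with h | h <;> simp [h]
  set X := Matrix.diagonal s * Bᵀ * Wmat Om i with hX
  set Q := (1 : Matrix (Fin m) (Fin m) ℝ) +
      γ • (Wmat Om i * (∑ j, s j • Kmat B j) * Wmat Om i) with hQdef
  set y := abar Om A i with hy
  set v := Q⁻¹ *ᵥ y with hvdef
  have hQpos : Q.PosDef := Qpos hγ Om B i hnn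
  have hQX : Q = 1 + γ • (Xᵀ * X) := by
    rw [hQdef, hX, WdBW B _ hW, hs2, sumK]
  have hv : ((1 : Matrix (Fin m) (Fin m) ℝ) + γ • (Xᵀ * X)) *ᵥ v = y := by
    rw [← hQX, hvdef]; exact posdef_inv_mulVec hQpos y
  constructor
  · intro u
    rw [ridge_decomp hγ X y v hv u]
    have h1 := dot_self_nonneg' ((u - γ • (X *ᵥ v)) ᵥ* X)
    have h2 := dot_self_nonneg' (u - γ • (X *ᵥ v))
    have h3 : (0:ℝ) ≤ 1 / γ := by positivity
    nlinarith
  · rw [ridge_decomp hγ X y v hv (γ • (X *ᵥ v))]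
    simp

lemma cfun_convex {n m p : ℕ} {γ : ℝ} (hγ : 0 < γ) (Om : Finset (Fin n × Fin m))
    (A : Matrix (Fin n) (Fin m) ℝ) (B : Matrix (Fin m) (Fin p) ℝ) :
    ConvexOn ℝ {s : Fin p → ℝ | ∀ j, 0 ≤ s j} (cfun γ Om A B) := by
  constructor
  · intro s₁ h₁ s₂ h₂ a b ha hb _ j
    have := add_nonneg (mul_nonneg ha (h₁ j)) (mul_nonneg hb (h₂ j))
    simpa using this
  · intro s₁ h₁ s₂ h₂ a b ha hb hab
    have key : ∀ i : Fin n,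
        abar Om A i ⬝ᵥ (((1 : Matrix (Fin m) (Fin m) ℝ) +
            γ • (Wmat Om i * (∑ j, (a • s₁ + b • s₂) j • Kmat B j) * Wmat Om i))⁻¹ *ᵥ
              abar Om A i)
        ≤ a * (abar Om A i ⬝ᵥ (((1 : Matrix (Fin m) (Fin m) ℝ) +
            γ • (Wmat Om i * (∑ j, s₁ j • Kmat B j) * Wmat Om i))⁻¹ *ᵥ abar Om A i))
          + b * (abar Om A i ⬝ᵥ (((1 : Matrix (Fin m) (Fin m) ℝ) +
            γ • (Wmat Om i * (∑ j, s₂ j • Kmat B j) * Wmat Om i))⁻¹ *ᵥ abar Om A i)) := by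
      intro i
      set y := abar Om A i with hy
      set Q1 := (1 : Matrix (Fin m) (Fin m) ℝ) +
          γ • (Wmat Om i * (∑ j, s₁ j • Kmat B j) * Wmat Om i) with hQ1def
      set Q2 := (1 : Matrix (Fin m) (Fin m) ℝ) +
          γ • (Wmat Om i * (∑ j, s₂ j • Kmat B j) * Wmat Om i) with hQ2def
      set Qab := (1 : Matrix (Fin m) (Fin m) ℝ) +
          γ • (Wmat Om i * (∑ j, (a • s₁ + b • s₂) j • Kmat B j) * Wmat Om i) with hQabdef
      have habnn : ∀ j, 0 ≤ (a • s₁ + b • s₂) j := fun j =>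
        add_nonneg (mul_nonneg ha (h₁ j)) (mul_nonneg hb (h₂ j))
      have hQ1pd : Q1.PosDef := Qpos hγ Om B i h₁
      have hQ2pd : Q2.PosDef := Qpos hγ Om B i h₂
      have hQabpd : Qab.PosDef := Qpos hγ Om B i habnn
      have hsum : ∑ j, (a • s₁ + b • s₂) j • Kmat B j
          = a • ∑ j, s₁ j • Kmat B j + b • ∑ j, s₂ j • Kmat B j := by
        rw [Finset.smul_sum, Finset.smul_sum, ← Finset.sum_add_distrib]
        refine Finset.sum_congr rfl fun j _ => ?_
        simp only [Pi.add_apply, Pi.smul_apply, smul_eq_mul]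
        rw [add_smul, mul_smul, mul_smul]
      have hone : (1 : Matrix (Fin m) (Fin m) ℝ) = a • 1 + b • 1 := by
        rw [← add_smul, hab, one_smul]
      have hQab : Qab = a • Q1 + b • Q2 := by
        rw [hQabdef, hsum, Matrix.mul_add, Matrix.add_mul, Matrix.mul_smul,
          Matrix.mul_smul, Matrix.smul_mul, Matrix.smul_mul, hQ1def, hQ2def]
        conv_lhs => rw [hone]
        module
      set vab := Qab⁻¹ *ᵥ y with hvab
      have hQv : Qab *ᵥ vab = y := posdef_inv_mulVec hQabpd y
      have h2 : vab ⬝ᵥ (Qab *ᵥ vab)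
          = a * (vab ⬝ᵥ (Q1 *ᵥ vab)) + b * (vab ⬝ᵥ (Q2 *ᵥ vab)) := by
        rw [hQab, add_mulVec, smul_mulVec, smul_mulVec, dotProduct_add,
          dotProduct_smul, dotProduct_smul, smul_eq_mul, smul_eq_mul]
      have expand : y ⬝ᵥ vab
          = a * (2 * (vab ⬝ᵥ y) - vab ⬝ᵥ (Q1 *ᵥ vab))
            + b * (2 * (vab ⬝ᵥ y) - vab ⬝ᵥ (Q2 *ᵥ vab)) := by
        have h1 : vab ⬝ᵥ (Qab *ᵥ vab) = vab ⬝ᵥ y := by rw [hQv]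
        have h3 : y ⬝ᵥ vab = vab ⬝ᵥ y := dotProduct_comm _ _
        linear_combination h3 - (2 * (vab ⬝ᵥ y)) * hab + h1 - h2
      rw [expand]
      exact add_le_add (mul_le_mul_of_nonneg_left (quad_ub hQ1pd y vab) ha)
        (mul_le_mul_of_nonneg_left (quad_ub hQ2pd y vab) hb)
    unfold cfun
    simp only [smul_eq_mul]
    calc (1 / ((n : ℝ) * (m : ℝ))) * ∑ i : Fin n,
          abar Om A i ⬝ᵥ (((1 : Matrix (Fin m) (Fin m) ℝ) +
            γ • (Wmat Om i * (∑ j, (a • s₁ + b • s₂) j • Kmat B j) * Wmat Om i))⁻¹ *ᵥ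
              abar Om A i)
        ≤ (1 / ((n : ℝ) * (m : ℝ))) * ∑ i : Fin n,
            (a * (abar Om A i ⬝ᵥ (((1 : Matrix (Fin m) (Fin m) ℝ) +
              γ • (Wmat Om i * (∑ j, s₁ j • Kmat B j) * Wmat Om i))⁻¹ *ᵥ abar Om A i))
            + b * (abar Om A i ⬝ᵥ (((1 : Matrix (Fin m) (Fin m) ℝ) +
              γ • (Wmat Om i * (∑ j, s₂ j • Kmat B j) * Wmat Om i))⁻¹ *ᵥ abar Om A i))) :=
          mul_le_mul_of_nonneg_left (Finset.sum_le_sum fun i _ => key i) (by positivity)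
      _ = _ := by
          rw [Finset.sum_add_distrib, ← Finset.mul_sum, ← Finset.mul_sum]
          ring

/-- For every `s ∈ S_k^p` the inner minimization over `U` attains its minimum with value
`c(s)`; consequently the full problem attains its minimum and its optimal value equals
`min_{s ∈ S_k^p} c(s)`.  Moreover `c` is convex (on the nonnegative orthant). -/
theorem stmt0 {n m p k : ℕ} (hn : 0 < n) (hm : 0 < m) (hk : 0 < k) (hkp : k ≤ p)
    (γ : ℝ) (hγ : 0 < γ) (Om : Finset (Fin n × Fin m))
    (A : Matrix (Fin n) (Fin m) ℝ) (B : Matrix (Fin m) (Fin p) ℝ) :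
    (∀ s ∈ SkpSet p k,
      IsLeast {v | ∃ U : Matrix (Fin n) (Fin p) ℝ, v = objFun γ Om A B U s}
        (cfun γ Om A B s)) ∧
    (∃ s₀ ∈ SkpSet p k,
      (∀ s ∈ SkpSet p k, cfun γ Om A B s₀ ≤ cfun γ Om A B s) ∧
      IsLeast {v | ∃ (U : Matrix (Fin n) (Fin p) ℝ) (s : Fin p → ℝ),
          s ∈ SkpSet p k ∧ v = objFun γ Om A B U s}
        (cfun γ Om A B s₀)) ∧
    ConvexOn ℝ {s : Fin p → ℝ | ∀ j, 0 ≤ s j} (cfun γ Om A B) := by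
  have claim1 : ∀ s ∈ SkpSet p k,
      IsLeast {v | ∃ U : Matrix (Fin n) (Fin p) ℝ, v = objFun γ Om A B U s}
        (cfun γ Om A B s) := by
    intro s hs
    constructor
    · refine ⟨Matrix.of (fun i => γ • ((Matrix.diagonal s * Bᵀ * Wmat Om i) *ᵥ
        (((1 : Matrix (Fin m) (Fin m) ℝ) +
          γ • (Wmat Om i * (∑ j, s j • Kmat B j) * Wmat Om i))⁻¹ *ᵥ abar Om A i))), ?_⟩
      rw [objFun_rows]
      unfold cfun
      congr 1
      refine Finset.sum_congr rfl fun i _ => ?_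
      exact ((row_key hγ Om A B hs.1 i).2).symm
    · rintro z ⟨U, rfl⟩
      rw [objFun_rows]
      unfold cfun
      exact mul_le_mul_of_nonneg_left
        (Finset.sum_le_sum fun i _ => (row_key hγ Om A B hs.1 i).1 (U i))
        (by positivity)
  obtain ⟨s₀, hs₀, hmin⟩ :=
    Set.exists_min_image (SkpSet p k) (cfun γ Om A B) skp_finite (skp_nonempty hkp)
  refine ⟨claim1, ⟨s₀, hs₀, hmin, ?_, ?_⟩, cfun_convex hγ Om A B⟩
  · obtain ⟨U, hU⟩ := (claim1 s₀ hs₀).1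
    exact ⟨U, s₀, hs₀, hU⟩
  · rintro z ⟨U, s, hsmem, rfl⟩
    exact le_trans (hmin s hsmem) ((claim1 s hsmem).2 ⟨U, rfl⟩)
end

section
/- Suppose that there do not exist two distinct s_0, s_1 ∈ S_k^p with c(s_1) = c(s_0). Then the convexity parameter a of c is strictly positive; that is, there exists a > 0 such that c(s) ≥ c(s_0) + ∇c(s_0)ᵀ(s − s_0) + (a²/2)(s − s_0)ᵀ(s − s_0) for all s, s_0 ∈ S_k^p. -/
open Matrix BigOperators

namespace Stmt15

variable {n m p : ℕ}

/-- the matrix `X_i(s)`. -/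
noncomputable def Xmat (γ : ℝ) (Om : Finset (Fin n × Fin m)) (B : Matrix (Fin m) (Fin p) ℝ)
    (s : Fin p → ℝ) (i : Fin n) : Matrix (Fin m) (Fin m) ℝ :=
  1 + γ • (Wmat Om i * (∑ j : Fin p, s j • Kmat B j) * Wmat Om i)

/-- the `j`-th column of `B`. -/
noncomputable def colB (B : Matrix (Fin m) (Fin p) ℝ) (j : Fin p) : Fin m → ℝ := fun r => B r j

lemma Kmat_mulVec (B : Matrix (Fin m) (Fin p) ℝ) (j : Fin p) (y : Fin m → ℝ) :
    Kmat B j *ᵥ y = (colB B j ⬝ᵥ y) • colB B j := by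
  funext r
  simp only [Kmat, Matrix.mulVec, colB, Matrix.vecMulVec_apply, dotProduct, Pi.smul_apply,
    smul_eq_mul, Finset.sum_mul]
  exact Finset.sum_congr rfl fun c _ => by ring

lemma sum_mulVec {ι : Type*} (t : Finset ι) (f : ι → Matrix (Fin m) (Fin m) ℝ) (x : Fin m → ℝ) :
    (∑ j ∈ t, f j) *ᵥ x = ∑ j ∈ t, f j *ᵥ x := by
  simp only [← Matrix.toLin'_apply, map_sum, LinearMap.coe_sum, Finset.sum_apply]


lemma dot_W_swap (Om : Finset (Fin n × Fin m)) (i : Fin n) (x y : Fin m → ℝ) :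
    x ⬝ᵥ (Wmat Om i *ᵥ y) = y ⬝ᵥ (Wmat Om i *ᵥ x) := by
  simp only [dotProduct, Wmat, Matrix.mulVec_diagonal]
  exact Finset.sum_congr rfl fun c _ => by ring

/-- quadratic form of `X_i(s)`. -/
lemma quadform (γ : ℝ) (Om : Finset (Fin n × Fin m)) (B : Matrix (Fin m) (Fin p) ℝ)
    (s : Fin p → ℝ) (i : Fin n) (x : Fin m → ℝ) :
    x ⬝ᵥ (Xmat γ Om B s i *ᵥ x)
      = x ⬝ᵥ x + γ * ∑ j, s j * (colB B j ⬝ᵥ (Wmat Om i *ᵥ x)) ^ 2 := by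
  have hW : Wmat Om i * (∑ j : Fin p, s j • Kmat B j) * Wmat Om i
      = ∑ j : Fin p, s j • (Wmat Om i * Kmat B j * Wmat Om i) := by
    rw [Finset.mul_sum, Finset.sum_mul]
    exact Finset.sum_congr rfl fun j _ => by
      rw [Matrix.mul_smul, Matrix.smul_mul]
  have hsum : ∀ g : Fin p → Fin m → ℝ, x ⬝ᵥ (∑ j, g j) = ∑ j, x ⬝ᵥ g j := by
    intro g
    simp only [dotProduct, Finset.sum_apply, Finset.mul_sum]
    rw [Finset.sum_comm]
  have hterm : ∀ j : Fin p, x ⬝ᵥ ((Wmat Om i * Kmat B j * Wmat Om i) *ᵥ x)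
      = (colB B j ⬝ᵥ (Wmat Om i *ᵥ x)) ^ 2 := by
    intro j
    rw [← Matrix.mulVec_mulVec, ← Matrix.mulVec_mulVec, Kmat_mulVec, Matrix.mulVec_smul,
      dotProduct_smul, smul_eq_mul, dot_W_swap, sq]
  rw [Xmat, hW, Matrix.add_mulVec, Matrix.one_mulVec, dotProduct_add,
    Matrix.smul_mulVec, dotProduct_smul, smul_eq_mul, sum_mulVec, hsum]
  congr 1
  congr 1
  refine Finset.sum_congr rfl fun j _ => ?_
  rw [Matrix.smul_mulVec, dotProduct_smul, smul_eq_mul, hterm j]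


/-- `X_i(s)` is symmetric. -/
lemma Xmat_herm (γ : ℝ) (Om : Finset (Fin n × Fin m)) (B : Matrix (Fin m) (Fin p) ℝ)
    (s : Fin p → ℝ) (i : Fin n) : (Xmat γ Om B s i).IsHermitian := by
  have hK : ∀ j : Fin p, (Kmat B j)ᵀ = Kmat B j := by
    intro j
    ext r c
    simp [Kmat, Matrix.vecMulVec_apply, Matrix.transpose_apply, mul_comm]
  have hW : (Wmat Om i)ᵀ = Wmat Om i := Matrix.diagonal_transpose _
  have hM : (∑ j : Fin p, s j • Kmat B j)ᵀ = ∑ j : Fin p, s j • Kmat B j := by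
    rw [Matrix.transpose_sum]
    exact Finset.sum_congr rfl fun j _ => by rw [Matrix.transpose_smul, hK]
  show (Xmat γ Om B s i)ᴴ = _
  rw [Matrix.conjTranspose_eq_transpose_of_trivial, Xmat, Matrix.transpose_add,
    Matrix.transpose_one, Matrix.transpose_smul, Matrix.transpose_mul, Matrix.transpose_mul,
    hW, hM, Matrix.mul_assoc]

/-- threshold for positive definiteness. -/
noncomputable def delB (γ : ℝ) (B : Matrix (Fin m) (Fin p) ℝ) : ℝ :=
  1 / (2 * (1 + γ * ∑ j, colB B j ⬝ᵥ colB B j))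

lemma betasum_nonneg (B : Matrix (Fin m) (Fin p) ℝ) :
    0 ≤ ∑ j, colB B j ⬝ᵥ colB B j :=
  Finset.sum_nonneg fun j _ => Finset.sum_nonneg fun r _ => mul_self_nonneg _

lemma delB_pos {γ : ℝ} (hγ : 0 < γ) (B : Matrix (Fin m) (Fin p) ℝ) : 0 < delB γ B := by
  have h := betasum_nonneg B
  have : 0 < 1 + γ * ∑ j, colB B j ⬝ᵥ colB B j := by nlinarith
  rw [delB]
  positivity

lemma quad_lower {γ : ℝ} (hγ : 0 < γ) (Om : Finset (Fin n × Fin m))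
    (B : Matrix (Fin m) (Fin p) ℝ) {s : Fin p → ℝ} (hs : ∀ j, -(delB γ B) ≤ s j)
    (i : Fin n) (x : Fin m → ℝ) :
    (1 / 2) * (x ⬝ᵥ x) ≤ x ⬝ᵥ (Xmat γ Om B s i *ᵥ x) := by
  have hxx : 0 ≤ x ⬝ᵥ x := Finset.sum_nonneg fun r _ => mul_self_nonneg _
  have hq : ∀ j : Fin p, 0 ≤ (colB B j ⬝ᵥ (Wmat Om i *ᵥ x)) ^ 2 := fun j => sq_nonneg _
  -- bound each quadratic term
  have hqb : ∀ j : Fin p, (colB B j ⬝ᵥ (Wmat Om i *ᵥ x)) ^ 2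
      ≤ (colB B j ⬝ᵥ colB B j) * (x ⬝ᵥ x) := by
    intro j
    have hcs := Finset.sum_mul_sq_le_sq_mul_sq Finset.univ (colB B j) (Wmat Om i *ᵥ x)
    have hWle : ∑ r, (Wmat Om i *ᵥ x) r ^ 2 ≤ ∑ r, x r ^ 2 := by
      refine Finset.sum_le_sum fun r _ => ?_
      simp only [Wmat, Matrix.mulVec_diagonal]
      by_cases h : (i, r) ∈ Om <;> simp [h, sq_nonneg]
    have h1 : (colB B j ⬝ᵥ (Wmat Om i *ᵥ x)) ^ 2
        ≤ (∑ r, colB B j r ^ 2) * ∑ r, (Wmat Om i *ᵥ x) r ^ 2 := hcs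
    have h2 : (∑ r, colB B j r ^ 2) * ∑ r, (Wmat Om i *ᵥ x) r ^ 2
        ≤ (∑ r, colB B j r ^ 2) * ∑ r, x r ^ 2 := by
      refine mul_le_mul_of_nonneg_left hWle ?_
      exact Finset.sum_nonneg fun r _ => sq_nonneg _
    have h3 : (∑ r, colB B j r ^ 2) = colB B j ⬝ᵥ colB B j := by
      simp [dotProduct, sq]
    have h4 : (∑ r, x r ^ 2) = x ⬝ᵥ x := by simp [dotProduct, sq]
    calc (colB B j ⬝ᵥ (Wmat Om i *ᵥ x)) ^ 2 ≤ _ := h1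
      _ ≤ _ := h2
      _ = _ := by rw [h3, h4]
  set δ := delB γ B with hδdef
  have hδpos : 0 < δ := delB_pos hγ B
  have hterm : ∀ j : Fin p, -(δ * ((colB B j ⬝ᵥ colB B j) * (x ⬝ᵥ x)))
      ≤ s j * (colB B j ⬝ᵥ (Wmat Om i *ᵥ x)) ^ 2 := by
    intro j
    have h1 : -δ * (colB B j ⬝ᵥ (Wmat Om i *ᵥ x)) ^ 2
        ≤ s j * (colB B j ⬝ᵥ (Wmat Om i *ᵥ x)) ^ 2 :=
      mul_le_mul_of_nonneg_right (hs j) (hq j)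
    have h2 : δ * (colB B j ⬝ᵥ (Wmat Om i *ᵥ x)) ^ 2
        ≤ δ * ((colB B j ⬝ᵥ colB B j) * (x ⬝ᵥ x)) :=
      mul_le_mul_of_nonneg_left (hqb j) hδpos.le
    nlinarith [hq j]
  have hsum : -(δ * ((∑ j, colB B j ⬝ᵥ colB B j) * (x ⬝ᵥ x)))
      ≤ ∑ j, s j * (colB B j ⬝ᵥ (Wmat Om i *ᵥ x)) ^ 2 := by
    have := Finset.sum_le_sum fun j (_ : j ∈ Finset.univ) => hterm j
    calc -(δ * ((∑ j, colB B j ⬝ᵥ colB B j) * (x ⬝ᵥ x)))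
        = ∑ j, -(δ * ((colB B j ⬝ᵥ colB B j) * (x ⬝ᵥ x))) := by
          rw [Finset.sum_mul, Finset.mul_sum, ← Finset.sum_neg_distrib]
      _ ≤ _ := this
  -- the key numeric bound
  have hnum : γ * (δ * ((∑ j, colB B j ⬝ᵥ colB B j) * (x ⬝ᵥ x))) ≤ (1/2) * (x ⬝ᵥ x) := by
    set T := γ * ∑ j, colB B j ⬝ᵥ colB B j with hT
    have hT0 : 0 ≤ T := mul_nonneg hγ.le (betasum_nonneg B)
    have hδ : δ = 1 / (2 * (1 + T)) := by rw [hδdef, delB, hT]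
    have h1T : (0:ℝ) < 1 + T := by linarith
    have : γ * (δ * ((∑ j, colB B j ⬝ᵥ colB B j) * (x ⬝ᵥ x))) = (T / (2 * (1+T))) * (x ⬝ᵥ x) := by
      rw [hδ, hT]; field_simp
    rw [this]
    have : T / (2 * (1+T)) ≤ 1/2 := by
      rw [div_le_iff₀ (by linarith)]
      nlinarith
    nlinarith
  rw [quadform]
  have := mul_le_mul_of_nonneg_left hsum hγ.le
  nlinarith


lemma Xmat_posdef {γ : ℝ} (hγ : 0 < γ) (Om : Finset (Fin n × Fin m))
    (B : Matrix (Fin m) (Fin p) ℝ) {s : Fin p → ℝ} (hs : ∀ j, -(delB γ B) ≤ s j) (i : Fin n) :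
    (Xmat γ Om B s i).PosDef := by
  refine Matrix.PosDef.of_dotProduct_mulVec_pos (Xmat_herm γ Om B s i) fun x hx => ?_
  have h := quad_lower hγ Om B hs i x
  have h0 : 0 ≤ x ⬝ᵥ x := Finset.sum_nonneg fun r _ => mul_self_nonneg _
  have hne : x ⬝ᵥ x ≠ 0 := fun hc => hx (dotProduct_self_eq_zero.mp hc)
  have hpos : 0 < x ⬝ᵥ x := lt_of_le_of_ne h0 (Ne.symm hne)
  simpa [star_trivial] using lt_of_lt_of_le (by linarith) h

lemma Xmat_isUnit {γ : ℝ} (hγ : 0 < γ) (Om : Finset (Fin n × Fin m))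
    (B : Matrix (Fin m) (Fin p) ℝ) {s : Fin p → ℝ} (hs : ∀ j, -(delB γ B) ≤ s j) (i : Fin n) :
    IsUnit (Xmat γ Om B s i).det :=
  (Xmat_posdef hγ Om B hs i).det_pos.ne'.isUnit

/-- `v_i(s) = X_i(s)⁻¹ āᵢ`. -/
noncomputable def vvec (γ : ℝ) (Om : Finset (Fin n × Fin m)) (A : Matrix (Fin n) (Fin m) ℝ)
    (B : Matrix (Fin m) (Fin p) ℝ) (s : Fin p → ℝ) (i : Fin n) : Fin m → ℝ :=
  (Xmat γ Om B s i)⁻¹ *ᵥ abar Om A i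

lemma Xmat_mulVec_vvec {γ : ℝ} (hγ : 0 < γ) (Om : Finset (Fin n × Fin m))
    (A : Matrix (Fin n) (Fin m) ℝ) (B : Matrix (Fin m) (Fin p) ℝ) {s : Fin p → ℝ}
    (hs : ∀ j, -(delB γ B) ≤ s j) (i : Fin n) :
    Xmat γ Om B s i *ᵥ vvec γ Om A B s i = abar Om A i := by
  rw [vvec, Matrix.mulVec_mulVec, Matrix.mul_nonsing_inv _ (Xmat_isUnit hγ Om B hs i),
    Matrix.one_mulVec]

lemma dot_X_swap (γ : ℝ) (Om : Finset (Fin n × Fin m)) (B : Matrix (Fin m) (Fin p) ℝ)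
    (s : Fin p → ℝ) (i : Fin n) (y z : Fin m → ℝ) :
    y ⬝ᵥ (Xmat γ Om B s i *ᵥ z) = (Xmat γ Om B s i *ᵥ y) ⬝ᵥ z := by
  have hT : (Xmat γ Om B s i)ᵀ = Xmat γ Om B s i := by
    have h := Xmat_herm γ Om B s i
    rwa [Matrix.IsHermitian, Matrix.conjTranspose_eq_transpose_of_trivial] at h
  rw [Matrix.dotProduct_mulVec]
  congr 1
  conv_lhs => rw [← hT]
  rw [Matrix.vecMul_transpose]

/-- key gap identity -/
lemma gap_identity {γ : ℝ} (hγ : 0 < γ) (Om : Finset (Fin n × Fin m))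
    (A : Matrix (Fin n) (Fin m) ℝ) (B : Matrix (Fin m) (Fin p) ℝ) {s s₀ : Fin p → ℝ}
    (hs : ∀ j, -(delB γ B) ≤ s j) (hs₀ : ∀ j, -(delB γ B) ≤ s₀ j) (i : Fin n) :
    abar Om A i ⬝ᵥ vvec γ Om A B s i
      - (2 * (abar Om A i ⬝ᵥ vvec γ Om A B s₀ i)
          - vvec γ Om A B s₀ i ⬝ᵥ (Xmat γ Om B s i *ᵥ vvec γ Om A B s₀ i))
      = (vvec γ Om A B s i - vvec γ Om A B s₀ i) ⬝ᵥ
          (Xmat γ Om B s i *ᵥ (vvec γ Om A B s i - vvec γ Om A B s₀ i)) := by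
  set a := abar Om A i
  set v := vvec γ Om A B s i
  set u := vvec γ Om A B s₀ i
  have hXv : Xmat γ Om B s i *ᵥ v = a := Xmat_mulVec_vvec hγ Om A B hs i
  rw [Matrix.mulVec_sub, dotProduct_sub, sub_dotProduct, sub_dotProduct,
    hXv, dot_X_swap γ Om B s i v u, hXv, dotProduct_comm v a, dotProduct_comm u a]
  ring

lemma base_eq {γ : ℝ} (hγ : 0 < γ) (Om : Finset (Fin n × Fin m))
    (A : Matrix (Fin n) (Fin m) ℝ) (B : Matrix (Fin m) (Fin p) ℝ) {s₀ : Fin p → ℝ}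
    (hs₀ : ∀ j, -(delB γ B) ≤ s₀ j) (i : Fin n) :
    2 * (abar Om A i ⬝ᵥ vvec γ Om A B s₀ i)
        - vvec γ Om A B s₀ i ⬝ᵥ (Xmat γ Om B s₀ i *ᵥ vvec γ Om A B s₀ i)
      = abar Om A i ⬝ᵥ vvec γ Om A B s₀ i := by
  rw [Xmat_mulVec_vvec hγ Om A B hs₀ i, dotProduct_comm]
  ring


section Analysis

attribute [local instance] Matrix.linftyOpNormedRing Matrix.linftyOpNormedAlgebra

/-- the quadratic form `M ↦ ā ⬝ᵥ (M *ᵥ ā)` as a continuous linear map. -/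
noncomputable def quadCLM (a : Fin m → ℝ) : Matrix (Fin m) (Fin m) ℝ →L[ℝ] ℝ :=
  LinearMap.toContinuousLinearMap
    { toFun := fun M => a ⬝ᵥ (M *ᵥ a)
      map_add' := fun M N => by
        rw [Matrix.add_mulVec, dotProduct_add]
      map_smul' := fun c M => by
        rw [Matrix.smul_mulVec, dotProduct_smul]
        rfl }

lemma quadCLM_apply (a : Fin m → ℝ) (M : Matrix (Fin m) (Fin m) ℝ) :
    quadCLM a M = a ⬝ᵥ (M *ᵥ a) := rfl

/-- the linear part of `s ↦ X_i(s)` as a continuous linear map. -/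
noncomputable def XmatCLM (γ : ℝ) (Om : Finset (Fin n × Fin m)) (B : Matrix (Fin m) (Fin p) ℝ)
    (i : Fin n) : (Fin p → ℝ) →L[ℝ] Matrix (Fin m) (Fin m) ℝ :=
  ∑ j : Fin p, (ContinuousLinearMap.proj j : (Fin p → ℝ) →L[ℝ] ℝ).smulRight
    (γ • (Wmat Om i * Kmat B j * Wmat Om i))

lemma Xmat_eq_affine (γ : ℝ) (Om : Finset (Fin n × Fin m)) (B : Matrix (Fin m) (Fin p) ℝ)
    (i : Fin n) (s : Fin p → ℝ) :
    Xmat γ Om B s i = 1 + XmatCLM γ Om B i s := by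
  have hW : Wmat Om i * (∑ j : Fin p, s j • Kmat B j) * Wmat Om i
      = ∑ j : Fin p, s j • (Wmat Om i * Kmat B j * Wmat Om i) := by
    rw [Finset.mul_sum, Finset.sum_mul]
    exact Finset.sum_congr rfl fun j _ => by rw [Matrix.mul_smul, Matrix.smul_mul]
  rw [Xmat, hW, XmatCLM]
  congr 1
  rw [ContinuousLinearMap.sum_apply, Finset.smul_sum]
  exact Finset.sum_congr rfl fun j _ => by
    rw [ContinuousLinearMap.smulRight_apply, ContinuousLinearMap.proj_apply, smul_comm]

lemma hasFDerivAt_Xmat (γ : ℝ) (Om : Finset (Fin n × Fin m)) (B : Matrix (Fin m) (Fin p) ℝ)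
    (i : Fin n) (s₀ : Fin p → ℝ) :
    HasFDerivAt (fun s => Xmat γ Om B s i) (XmatCLM γ Om B i) s₀ := by
  have : (fun s => Xmat γ Om B s i) = fun s => 1 + XmatCLM γ Om B i s :=
    funext fun s => Xmat_eq_affine γ Om B i s
  rw [this]
  exact ((XmatCLM γ Om B i).hasFDerivAt).const_add 1

lemma cfun_eq (γ : ℝ) (Om : Finset (Fin n × Fin m)) (A : Matrix (Fin n) (Fin m) ℝ)
    (B : Matrix (Fin m) (Fin p) ℝ) :
    cfun γ Om A B = fun s => (1 / ((n : ℝ) * (m : ℝ))) * ∑ i : Fin n,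
      quadCLM (abar Om A i) (Ring.inverse (Xmat γ Om B s i)) := by
  funext s
  rw [cfun]
  congr 1
  refine Finset.sum_congr rfl fun i _ => ?_
  rw [quadCLM_apply, ← Matrix.nonsing_inv_eq_ringInverse]
  rfl

lemma cfun_eq_vvec (γ : ℝ) (Om : Finset (Fin n × Fin m)) (A : Matrix (Fin n) (Fin m) ℝ)
    (B : Matrix (Fin m) (Fin p) ℝ) (s : Fin p → ℝ) :
    cfun γ Om A B s = (1 / ((n : ℝ) * (m : ℝ))) * ∑ i : Fin n,
      abar Om A i ⬝ᵥ vvec γ Om A B s i := rfl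

lemma cfun_differentiableAt {γ : ℝ} (hγ : 0 < γ) (Om : Finset (Fin n × Fin m))
    (A : Matrix (Fin n) (Fin m) ℝ) (B : Matrix (Fin m) (Fin p) ℝ) {s₀ : Fin p → ℝ}
    (hs₀ : ∀ j, -(delB γ B) ≤ s₀ j) :
    DifferentiableAt ℝ (cfun γ Om A B) s₀ := by
  rw [cfun_eq]
  refine DifferentiableAt.const_mul ?_ _
  refine DifferentiableAt.fun_sum fun i _ => ?_
  refine (quadCLM (abar Om A i)).differentiableAt.comp _ ?_
  refine DifferentiableAt.inverse ?_ ?_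
  · exact (hasFDerivAt_Xmat γ Om B i s₀).differentiableAt
  · exact (Xmat_posdef hγ Om B hs₀ i).isUnit

end Analysis

/-- the coefficient of `s j` in the affine minorant. -/
noncomputable def wcoef (γ : ℝ) (Om : Finset (Fin n × Fin m)) (A : Matrix (Fin n) (Fin m) ℝ)
    (B : Matrix (Fin m) (Fin p) ℝ) (s₀ : Fin p → ℝ) (j : Fin p) : ℝ :=
  -((1 / ((n : ℝ) * (m : ℝ))) * (γ * ∑ i : Fin n,
    (colB B j ⬝ᵥ (Wmat Om i *ᵥ vvec γ Om A B s₀ i)) ^ 2))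

/-- the affine minorant of `cfun` touching at `s₀`. -/
noncomputable def Lfun (γ : ℝ) (Om : Finset (Fin n × Fin m)) (A : Matrix (Fin n) (Fin m) ℝ)
    (B : Matrix (Fin m) (Fin p) ℝ) (s₀ s : Fin p → ℝ) : ℝ :=
  (1 / ((n : ℝ) * (m : ℝ))) * ∑ i : Fin n, (2 * (abar Om A i ⬝ᵥ vvec γ Om A B s₀ i)
    - vvec γ Om A B s₀ i ⬝ᵥ (Xmat γ Om B s i *ᵥ vvec γ Om A B s₀ i))

lemma Lfun_sub (γ : ℝ) (Om : Finset (Fin n × Fin m)) (A : Matrix (Fin n) (Fin m) ℝ)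
    (B : Matrix (Fin m) (Fin p) ℝ) (s₀ s s' : Fin p → ℝ) :
    Lfun γ Om A B s₀ s - Lfun γ Om A B s₀ s' = ∑ j, (s j - s' j) * wcoef γ Om A B s₀ j := by
  rw [Lfun, Lfun, ← mul_sub, ← Finset.sum_sub_distrib]
  have key : ∀ i : Fin n,
      (2 * (abar Om A i ⬝ᵥ vvec γ Om A B s₀ i)
        - vvec γ Om A B s₀ i ⬝ᵥ (Xmat γ Om B s i *ᵥ vvec γ Om A B s₀ i))
      - (2 * (abar Om A i ⬝ᵥ vvec γ Om A B s₀ i)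
        - vvec γ Om A B s₀ i ⬝ᵥ (Xmat γ Om B s' i *ᵥ vvec γ Om A B s₀ i))
      = γ * ∑ j, (s' j - s j) * (colB B j ⬝ᵥ (Wmat Om i *ᵥ vvec γ Om A B s₀ i)) ^ 2 := by
    intro i
    rw [quadform γ Om B s i, quadform γ Om B s' i]
    have hS : ∑ j, (s' j - s j) * (colB B j ⬝ᵥ (Wmat Om i *ᵥ vvec γ Om A B s₀ i)) ^ 2
        = (∑ j, s' j * (colB B j ⬝ᵥ (Wmat Om i *ᵥ vvec γ Om A B s₀ i)) ^ 2)
          - ∑ j, s j * (colB B j ⬝ᵥ (Wmat Om i *ᵥ vvec γ Om A B s₀ i)) ^ 2 := by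
      rw [← Finset.sum_sub_distrib]
      exact Finset.sum_congr rfl fun j _ => sub_mul _ _ _
    rw [hS]
    ring
  rw [Finset.sum_congr rfl fun i _ => key i]
  simp only [wcoef, Finset.mul_sum, mul_neg, Finset.sum_neg_distrib, neg_neg]
  rw [Finset.sum_comm, ← Finset.sum_neg_distrib]
  refine Finset.sum_congr rfl fun j _ => ?_
  rw [← Finset.sum_neg_distrib]
  exact Finset.sum_congr rfl fun i _ => by ring

section Analysis2

attribute [local instance] Matrix.linftyOpNormedRing Matrix.linftyOpNormedAlgebra

/-- the linear functional `∇L`. -/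
noncomputable def ellCLM (γ : ℝ) (Om : Finset (Fin n × Fin m)) (A : Matrix (Fin n) (Fin m) ℝ)
    (B : Matrix (Fin m) (Fin p) ℝ) (s₀ : Fin p → ℝ) : (Fin p → ℝ) →L[ℝ] ℝ :=
  ∑ j : Fin p, wcoef γ Om A B s₀ j • (ContinuousLinearMap.proj j : (Fin p → ℝ) →L[ℝ] ℝ)

lemma ellCLM_apply (γ : ℝ) (Om : Finset (Fin n × Fin m)) (A : Matrix (Fin n) (Fin m) ℝ)
    (B : Matrix (Fin m) (Fin p) ℝ) (s₀ : Fin p → ℝ) (x : Fin p → ℝ) :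
    ellCLM γ Om A B s₀ x = ∑ j, x j * wcoef γ Om A B s₀ j := by
  rw [ellCLM, ContinuousLinearMap.sum_apply]
  exact Finset.sum_congr rfl fun j _ => by
    rw [ContinuousLinearMap.smul_apply, ContinuousLinearMap.proj_apply, smul_eq_mul, mul_comm]

lemma hasFDerivAt_Lfun (γ : ℝ) (Om : Finset (Fin n × Fin m)) (A : Matrix (Fin n) (Fin m) ℝ)
    (B : Matrix (Fin m) (Fin p) ℝ) (s₀ sb : Fin p → ℝ) :
    HasFDerivAt (Lfun γ Om A B s₀) (ellCLM γ Om A B s₀) sb := by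
  have h : Lfun γ Om A B s₀ = fun s => Lfun γ Om A B s₀ 0 + ellCLM γ Om A B s₀ s := by
    funext s
    have hd := Lfun_sub γ Om A B s₀ s 0
    rw [ellCLM_apply]
    have : ∑ j, (s j - (0 : Fin p → ℝ) j) * wcoef γ Om A B s₀ j
        = ∑ j, s j * wcoef γ Om A B s₀ j := by
      exact Finset.sum_congr rfl fun j _ => by simp
    rw [this] at hd
    linarith
  rw [h]
  exact (ellCLM γ Om A B s₀).hasFDerivAt.const_add _

lemma cfun_ge_Lfun {γ : ℝ} (hγ : 0 < γ) (Om : Finset (Fin n × Fin m))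
    (A : Matrix (Fin n) (Fin m) ℝ) (B : Matrix (Fin m) (Fin p) ℝ) {s₀ s : Fin p → ℝ}
    (hs₀ : ∀ j, -(delB γ B) ≤ s₀ j) (hs : ∀ j, -(delB γ B) ≤ s j) :
    Lfun γ Om A B s₀ s ≤ cfun γ Om A B s := by
  rw [cfun_eq_vvec, Lfun]
  refine mul_le_mul_of_nonneg_left (Finset.sum_le_sum fun i _ => ?_) (by positivity)
  have hgap := gap_identity hγ Om A B hs hs₀ i
  have hql := quad_lower hγ Om B hs i (vvec γ Om A B s i - vvec γ Om A B s₀ i)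
  have h0 : 0 ≤ (vvec γ Om A B s i - vvec γ Om A B s₀ i) ⬝ᵥ
      (vvec γ Om A B s i - vvec γ Om A B s₀ i) :=
    Finset.sum_nonneg fun r _ => mul_self_nonneg _
  linarith

lemma Lfun_at_base {γ : ℝ} (hγ : 0 < γ) (Om : Finset (Fin n × Fin m))
    (A : Matrix (Fin n) (Fin m) ℝ) (B : Matrix (Fin m) (Fin p) ℝ) {s₀ : Fin p → ℝ}
    (hs₀ : ∀ j, -(delB γ B) ≤ s₀ j) :
    Lfun γ Om A B s₀ s₀ = cfun γ Om A B s₀ := by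
  rw [Lfun, cfun_eq_vvec]
  congr 1
  exact Finset.sum_congr rfl fun i _ => base_eq hγ Om A B hs₀ i

lemma fderiv_cfun_eq {γ : ℝ} (hγ : 0 < γ) (Om : Finset (Fin n × Fin m))
    (A : Matrix (Fin n) (Fin m) ℝ) (B : Matrix (Fin m) (Fin p) ℝ) {s₀ : Fin p → ℝ}
    (hs₀ : ∀ j, 0 ≤ s₀ j) :
    fderiv ℝ (cfun γ Om A B) s₀ = ellCLM γ Om A B s₀ := by
  have hδ := delB_pos hγ B
  have hs₀' : ∀ j, -(delB γ B) ≤ s₀ j := fun j => le_trans (by linarith) (hs₀ j)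
  have hdiff := cfun_differentiableAt hγ Om A B hs₀'
  have hLdiff := (hasFDerivAt_Lfun γ Om A B s₀ s₀).differentiableAt
  have hbase := Lfun_at_base hγ Om A B hs₀'
  have hmin : IsLocalMin (fun s => cfun γ Om A B s - Lfun γ Om A B s₀ s) s₀ := by
    have hball : Metric.ball s₀ (delB γ B) ∈ nhds s₀ := Metric.ball_mem_nhds _ hδ
    refine Filter.eventually_of_mem hball fun s hsball => ?_
    have hs' : ∀ j, -(delB γ B) ≤ s j := by
      intro j
      have h1 : dist (s j) (s₀ j) ≤ dist s s₀ := dist_le_pi_dist s s₀ j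
      have h2 : dist s s₀ < delB γ B := Metric.mem_ball.mp hsball
      have h3 : |s j - s₀ j| < delB γ B := by
        rw [← Real.dist_eq]; linarith
      have h4 := (abs_lt.mp h3).1
      have := hs₀ j
      linarith
    have h1 := cfun_ge_Lfun hγ Om A B hs₀' hs'
    simp only
    rw [hbase]
    linarith
  have h0 : fderiv ℝ (fun s => cfun γ Om A B s - Lfun γ Om A B s₀ s) s₀ = 0 :=
    hmin.fderiv_eq_zero
  rw [fderiv_fun_sub hdiff hLdiff, (hasFDerivAt_Lfun γ Om A B s₀ s₀).fderiv] at h0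
  exact sub_eq_zero.mp h0

end Analysis2


lemma gap_pos {γ : ℝ} (hγ : 0 < γ) (hn : 0 < n) (hm : 0 < m) (Om : Finset (Fin n × Fin m))
    (A : Matrix (Fin n) (Fin m) ℝ) (B : Matrix (Fin m) (Fin p) ℝ) {s s₀ : Fin p → ℝ}
    (hs : ∀ j, -(delB γ B) ≤ s j) (hs₀ : ∀ j, -(delB γ B) ≤ s₀ j)
    (hcne : cfun γ Om A B s₀ ≠ cfun γ Om A B s) :
    0 < cfun γ Om A B s - Lfun γ Om A B s₀ s := by
  have hn' : (0:ℝ) < (n:ℝ) := Nat.cast_pos.mpr hn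
  have hm' : (0:ℝ) < (m:ℝ) := Nat.cast_pos.mpr hm
  have hc₀ : 0 < 1 / ((n:ℝ) * (m:ℝ)) := by positivity
  rw [cfun_eq_vvec, Lfun, ← mul_sub, ← Finset.sum_sub_distrib]
  refine mul_pos hc₀ ?_
  rw [Finset.sum_congr rfl fun i _ => gap_identity hγ Om A B hs hs₀ i]
  have hnn : ∀ i : Fin n, 0 ≤ (vvec γ Om A B s i - vvec γ Om A B s₀ i) ⬝ᵥ
      (Xmat γ Om B s i *ᵥ (vvec γ Om A B s i - vvec γ Om A B s₀ i)) := by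
    intro i
    have h1 := quad_lower hγ Om B hs i (vvec γ Om A B s i - vvec γ Om A B s₀ i)
    have h0 : 0 ≤ (vvec γ Om A B s i - vvec γ Om A B s₀ i) ⬝ᵥ
        (vvec γ Om A B s i - vvec γ Om A B s₀ i) :=
      Finset.sum_nonneg fun r _ => mul_self_nonneg _
    linarith
  by_cases hall : ∀ i, vvec γ Om A B s i = vvec γ Om A B s₀ i
  · exfalso
    apply hcne
    rw [cfun_eq_vvec, cfun_eq_vvec]
    congr 1
    exact Finset.sum_congr rfl fun i _ => by rw [hall i]
  · push_neg at hall
    obtain ⟨i₀, hi₀⟩ := hall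
    refine Finset.sum_pos' (fun i _ => hnn i) ⟨i₀, Finset.mem_univ _, ?_⟩
    have hdne : vvec γ Om A B s i₀ - vvec γ Om A B s₀ i₀ ≠ 0 := sub_ne_zero.mpr hi₀
    have h1 := quad_lower hγ Om B hs i₀ (vvec γ Om A B s i₀ - vvec γ Om A B s₀ i₀)
    have h0 : 0 ≤ (vvec γ Om A B s i₀ - vvec γ Om A B s₀ i₀) ⬝ᵥ
        (vvec γ Om A B s i₀ - vvec γ Om A B s₀ i₀) :=
      Finset.sum_nonneg fun r _ => mul_self_nonneg _
    have h2 : (vvec γ Om A B s i₀ - vvec γ Om A B s₀ i₀) ⬝ᵥ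
        (vvec γ Om A B s i₀ - vvec γ Om A B s₀ i₀) ≠ 0 :=
      fun hc => hdne (dotProduct_self_eq_zero.mp hc)
    have h3 : 0 < (vvec γ Om A B s i₀ - vvec γ Om A B s₀ i₀) ⬝ᵥ
        (vvec γ Om A B s i₀ - vvec γ Om A B s₀ i₀) := lt_of_le_of_ne h0 (Ne.symm h2)
    linarith

lemma skp_finite (p k : ℕ) : (SkpSet p k).Finite := by
  classical
  have hsub : SkpSet p k ⊆
      Set.range (fun f : Fin p → Bool => fun j => if f j then (1:ℝ) else 0) := by
    intro s hs
    refine ⟨fun j => if s j = 1 then true else false, ?_⟩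
    funext j
    rcases hs.1 j with h | h <;> simp [h]
  exact (Set.finite_range _).subset hsub

end Stmt15

/-- If no two distinct points of `S_k^p` give the same value of `c`, then the convexity
parameter of `c` is strictly positive: there is `a > 0` such that
`c(s) ≥ c(s₀) + ∇c(s₀)ᵀ(s − s₀) + (a²/2)‖s − s₀‖₂²` for all `s, s₀ ∈ S_k^p`. -/
theorem stmt15 {n m p k : ℕ} (hn : 0 < n) (hm : 0 < m) (hk : 0 < k) (hkp : k ≤ p)
    (γ : ℝ) (hγ : 0 < γ) (Om : Finset (Fin n × Fin m))
    (A : Matrix (Fin n) (Fin m) ℝ) (B : Matrix (Fin m) (Fin p) ℝ)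
    (hne : ∀ s₀ ∈ SkpSet p k, ∀ s₁ ∈ SkpSet p k, s₀ ≠ s₁ →
      cfun γ Om A B s₀ ≠ cfun γ Om A B s₁) :
    ∃ a : ℝ, 0 < a ∧ ∀ s ∈ SkpSet p k, ∀ s₀ ∈ SkpSet p k,
      cfun γ Om A B s₀ + fderiv ℝ (cfun γ Om A B) s₀ (s - s₀) +
          a ^ 2 / 2 * ∑ j, (s j - s₀ j) ^ 2 ≤
        cfun γ Om A B s := by
  classical
  have hδ := Stmt15.delB_pos hγ B
  have hmem : ∀ s ∈ SkpSet p k, ∀ j, 0 ≤ s j := by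
    intro s hs j
    rcases hs.1 j with h | h <;> rw [h] <;> norm_num
  have hmem' : ∀ s ∈ SkpSet p k, ∀ j, -(Stmt15.delB γ B) ≤ s j := by
    intro s hs j
    have := hmem s hs j
    linarith
  have hfin := Stmt15.skp_finite p k
  set F := hfin.toFinset with hF
  set P := (F ×ˢ F).filter (fun q => q.1 ≠ q.2) with hP
  set gq : (Fin p → ℝ) × (Fin p → ℝ) → ℝ := fun q =>
    (cfun γ Om A B q.1 - Stmt15.Lfun γ Om A B q.2 q.1) / (∑ j, (q.1 j - q.2 j) ^ 2) with hgq
  set E := insert (1:ℝ) (P.image gq) with hE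
  have hEne : E.Nonempty := ⟨1, Finset.mem_insert_self _ _⟩
  set ε := E.min' hEne with hεdef
  have hQpos : ∀ q ∈ P, 0 < ∑ j, (q.1 j - q.2 j) ^ 2 := by
    intro q hq
    obtain ⟨hqmem, hne12⟩ := Finset.mem_filter.mp hq
    have hj : ∃ j, q.1 j ≠ q.2 j := by
      by_contra hcon
      push_neg at hcon
      exact hne12 (funext hcon)
    obtain ⟨j0, hj0⟩ := hj
    refine Finset.sum_pos' (fun j _ => sq_nonneg _) ⟨j0, Finset.mem_univ _, ?_⟩
    exact sq_pos_of_ne_zero (sub_ne_zero.mpr hj0)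
  have hGpos : ∀ q ∈ P, 0 < cfun γ Om A B q.1 - Stmt15.Lfun γ Om A B q.2 q.1 := by
    intro q hq
    obtain ⟨hqmem, hne12⟩ := Finset.mem_filter.mp hq
    have h1 : q.1 ∈ SkpSet p k := by
      have := (Finset.mem_product.mp hqmem).1
      rwa [hF, Set.Finite.mem_toFinset] at this
    have h2 : q.2 ∈ SkpSet p k := by
      have := (Finset.mem_product.mp hqmem).2
      rwa [hF, Set.Finite.mem_toFinset] at this
    exact Stmt15.gap_pos hγ hn hm Om A B (hmem' _ h1) (hmem' _ h2)
      (hne q.2 h2 q.1 h1 (Ne.symm hne12))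
  have hεpos : 0 < ε := by
    have hm2 := E.min'_mem hEne
    rw [← hεdef] at hm2
    rw [hE] at hm2
    rcases Finset.mem_insert.mp hm2 with h | h
    · rw [h]; norm_num
    · obtain ⟨q, hq, hgqe⟩ := Finset.mem_image.mp h
      rw [← hgqe]
      exact div_pos (hGpos q hq) (hQpos q hq)
  refine ⟨Real.sqrt ε, Real.sqrt_pos.mpr hεpos, ?_⟩
  intro s hs s₀ hs₀
  rw [Real.sq_sqrt hεpos.le]
  by_cases hsame : s = s₀
  · subst hsame
    rw [sub_self, map_zero]
    simp
  · have hfd := Stmt15.fderiv_cfun_eq hγ Om A B (hmem s₀ hs₀)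
    have hqP : (s, s₀) ∈ P := by
      refine Finset.mem_filter.mpr ⟨Finset.mem_product.mpr ⟨?_, ?_⟩, hsame⟩ <;>
        rw [hF, Set.Finite.mem_toFinset] <;> assumption
    have hεle : ε ≤ gq (s, s₀) :=
      Finset.min'_le E _ (Finset.mem_insert_of_mem (Finset.mem_image_of_mem gq hqP))
    have hQ := hQpos (s, s₀) hqP
    have hG := hGpos (s, s₀) hqP
    have hεQ : ε * (∑ j, (s j - s₀ j) ^ 2) ≤ cfun γ Om A B s - Stmt15.Lfun γ Om A B s₀ s := by
      rw [hgq] at hεle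
      dsimp at hεle hQ ⊢
      exact (le_div_iff₀ hQ).mp hεle
    have happ : fderiv ℝ (cfun γ Om A B) s₀ (s - s₀)
        = Stmt15.Lfun γ Om A B s₀ s - cfun γ Om A B s₀ := by
      rw [hfd, Stmt15.ellCLM_apply]
      simp only [Pi.sub_apply]
      have hsub := Stmt15.Lfun_sub γ Om A B s₀ s s₀
      rw [Stmt15.Lfun_at_base hγ Om A B (hmem' s₀ hs₀)] at hsub
      linarith [hsub]
    rw [happ]
    have hε2 : ε / 2 * (∑ j, (s j - s₀ j) ^ 2) ≤ ε * (∑ j, (s j - s₀ j) ^ 2) := by nlinarith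
    linarith
end
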